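/- Let a_1,…,a_n be integers with a_1+…+a_n = 0, and suppose the partial sums r_k = a_1+…+a_k are positive for k=1,…,n−1. Let φ(a_1,…,a_n) be the Kostant partition function, i.e., the number of families (x(e)) of nonnegative integers indexed by the pairs e = (i→j) with n ≥ i > j ≥ 1 such that at every vertex v ∈ {1,…,n} one has Σ_{e: head(e)=v} x(e) − Σ_{e: tail(e)=v} x(e) = a_v (where the edge i→j has tail i and head j). Define the (n−1)×(n−1) matrix W=(w_{ij}) by w_{ij} = 1 if i ≥ j−1 and w_{ij} = 0 otherwise, and set R = C = (r_1,…,r_{n−1}). Then φ(a_1,…,a_n) = T(R,C;W). -/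

import Mathlib

open scoped BigOperators

/-- The total weight `T(R,C;W)` of contingency tables with row sums `R`,
column sums `C`, and weight `∏ W i j ^ D i j` (with the convention `0 ^ 0 = 1`). -/
noncomputable def tableWeight {m n : ℕ} (R : Fin m → ℕ) (C : Fin n → ℕ)
    (W : Fin m → Fin n → ℝ) : ℝ :=
  ∑' D : {D : Fin m → Fin n → ℕ //
      (∀ i, ∑ j, D i j = R i) ∧ (∀ j, ∑ i, D i j = C j)},
    ∏ i, ∏ j, W i j ^ D.1 i j

lemma margins_finite {m n : ℕ} (R : Fin m → ℕ) (C : Fin n → ℕ) :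
    Finite {D : Fin m → Fin n → ℕ //
      (∀ i, ∑ j, D i j = R i) ∧ (∀ j, ∑ i, D i j = C j)} := by
  apply Finite.of_injective
    (f := fun D (i : Fin m) (j : Fin n) =>
      (⟨D.1 i j, by
        have h := D.2.1 i
        have : D.1 i j ≤ ∑ j', D.1 i j' :=
          Finset.single_le_sum (fun _ _ => Nat.zero_le _) (Finset.mem_univ j)
        omega⟩ : Fin (R i + 1)))
  intro D E h
  apply Subtype.ext
  funext i j
  exact congrArg Fin.val (congrFun (congrFun h i) j)

lemma tableWeight_eq_card {m n : ℕ} (R : Fin m → ℕ) (C : Fin n → ℕ)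
    (W : Fin m → Fin n → ℝ) (P : Fin m → Fin n → Prop) [∀ i j, Decidable (P i j)]
    (hW : ∀ i j, W i j = if P i j then 1 else 0) :
    tableWeight R C W = Nat.card {D : Fin m → Fin n → ℕ //
      ((∀ i, ∑ j, D i j = R i) ∧ (∀ j, ∑ i, D i j = C j)) ∧
      ∀ i j, D i j ≠ 0 → P i j} := by
  classical
  haveI := margins_finite R C
  haveI := Fintype.ofFinite {D : Fin m → Fin n → ℕ //
      (∀ i, ∑ j, D i j = R i) ∧ (∀ j, ∑ i, D i j = C j)}
  rw [tableWeight, tsum_fintype]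
  have hsummand : ∀ D : {D : Fin m → Fin n → ℕ //
      (∀ i, ∑ j, D i j = R i) ∧ (∀ j, ∑ i, D i j = C j)},
      (∏ i, ∏ j, W i j ^ D.1 i j) =
        if (∀ i j, D.1 i j ≠ 0 → P i j) then (1:ℝ) else 0 := by
    intro D
    by_cases h : ∀ i j, D.1 i j ≠ 0 → P i j
    · rw [if_pos h]
      apply Finset.prod_eq_one
      intro i _
      apply Finset.prod_eq_one
      intro j _
      by_cases hd : D.1 i j = 0
      · simp [hd]
      · rw [hW, if_pos (h i j hd), one_pow]
    · rw [if_neg h]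
      push_neg at h
      obtain ⟨i, j, hd, hp⟩ := h
      apply Finset.prod_eq_zero (Finset.mem_univ i)
      apply Finset.prod_eq_zero (Finset.mem_univ j)
      rw [hW, if_neg hp]
      exact zero_pow hd
  haveI : Finite {D : Fin m → Fin n → ℕ //
      ((∀ i, ∑ j, D i j = R i) ∧ (∀ j, ∑ i, D i j = C j)) ∧
      ∀ i j, D i j ≠ 0 → P i j} := by
    apply Finite.of_injective (f := fun D => (⟨D.1, D.2.1⟩ : {D : Fin m → Fin n → ℕ //
      (∀ i, ∑ j, D i j = R i) ∧ (∀ j, ∑ i, D i j = C j)}))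
    intro D E h
    simpa [Subtype.ext_iff] using h
  haveI := Fintype.ofFinite {D : Fin m → Fin n → ℕ //
      ((∀ i, ∑ j, D i j = R i) ∧ (∀ j, ∑ i, D i j = C j)) ∧
      ∀ i j, D i j ≠ 0 → P i j}
  rw [Finset.sum_congr rfl (fun D _ => hsummand D), Finset.sum_boole]
  rw [Nat.card_eq_fintype_card]
  congr 1
  rw [← Fintype.card_subtype]
  apply Fintype.card_congr
  exact Equiv.subtypeSubtypeEquivSubtypeInter
    (fun D : Fin m → Fin n → ℕ => (∀ i, ∑ j, D i j = R i) ∧ (∀ j, ∑ i, D i j = C j))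
    (fun D => ∀ i j, D i j ≠ 0 → P i j)

section Cut
variable {m : ℕ} (x : Fin (m+1) → Fin (m+1) → ℕ)
  (hsupp : ∀ i j, x i j ≠ 0 → j < i)
  (a : Fin (m+1) → ℤ)
  (hcons : ∀ v, (∑ i, (x i v : ℤ)) - ∑ j, (x v j : ℤ) = a v)

include hsupp hcons in
lemma cut_int (k : ℕ) :
    ∑ i : Fin (m+1), ∑ j : Fin (m+1), (if (j:ℕ) ≤ k ∧ k < (i:ℕ) then (x i j : ℤ) else 0)
      = ∑ v ∈ Finset.univ.filter (fun v : Fin (m+1) => (v:ℕ) ≤ k), a v := by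
  have key : ∀ i j : Fin (m+1),
      (if (j:ℕ) ≤ k ∧ k < (i:ℕ) then (x i j : ℤ) else 0)
        = (if (j:ℕ) ≤ k then (x i j : ℤ) else 0)
          - (if (i:ℕ) ≤ k then (x i j : ℤ) else 0) := by
    intro i j
    rcases eq_or_ne (x i j) 0 with h | h
    · simp [h]
    · have hij : (j:ℕ) < (i:ℕ) := hsupp i j h
      split_ifs <;> omega
  calc ∑ i : Fin (m+1), ∑ j : Fin (m+1), (if (j:ℕ) ≤ k ∧ k < (i:ℕ) then (x i j : ℤ) else 0)
      = ∑ i : Fin (m+1), ∑ j : Fin (m+1), ((if (j:ℕ) ≤ k then (x i j : ℤ) else 0)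
          - (if (i:ℕ) ≤ k then (x i j : ℤ) else 0)) := by
        exact Finset.sum_congr rfl fun i _ => Finset.sum_congr rfl fun j _ => key i j
    _ = (∑ i : Fin (m+1), ∑ j : Fin (m+1), (if (j:ℕ) ≤ k then (x i j : ℤ) else 0))
          - ∑ i : Fin (m+1), ∑ j : Fin (m+1), (if (i:ℕ) ≤ k then (x i j : ℤ) else 0) := by
        rw [← Finset.sum_sub_distrib]
        exact Finset.sum_congr rfl fun i _ => Finset.sum_sub_distrib _ _
    _ = (∑ v ∈ Finset.univ.filter (fun v : Fin (m+1) => (v:ℕ) ≤ k), ∑ i, (x i v : ℤ))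
          - ∑ v ∈ Finset.univ.filter (fun v : Fin (m+1) => (v:ℕ) ≤ k), ∑ j, (x v j : ℤ) := by
        congr 1
        · rw [Finset.sum_comm, Finset.sum_filter]
          refine Finset.sum_congr rfl fun v _ => ?_
          split_ifs <;> simp
        · rw [Finset.sum_filter]
          refine Finset.sum_congr rfl fun i _ => ?_
          split_ifs <;> simp
    _ = ∑ v ∈ Finset.univ.filter (fun v : Fin (m+1) => (v:ℕ) ≤ k), a v := by
        rw [← Finset.sum_sub_distrib]
        exact Finset.sum_congr rfl fun v _ => hcons v

variable (R : Fin m → ℕ)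
  (hR : ∀ k : Fin m, (R k : ℤ) =
    ∑ i ∈ Finset.univ.filter (fun i : Fin (m+1) => (i : ℕ) ≤ (k : ℕ)), a i)

include hsupp hcons hR in
lemma cut_nat (k : Fin m) :
    (∑ i : Fin (m+1), ∑ j : Fin (m+1),
      if (j:ℕ) ≤ (k:ℕ) ∧ (k:ℕ) < (i:ℕ) then x i j else 0) = R k := by
  have h := cut_int x hsupp a hcons (k:ℕ)
  rw [← hR k] at h
  exact_mod_cast h

include hsupp in
lemma xsucc_ite (k : Fin m) (l : Fin (m+1)) :
    x k.succ l = if (l:ℕ) ≤ (k:ℕ) ∧ (k:ℕ) < ((k.succ : Fin (m+1)):ℕ) then x k.succ l else 0 := by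
  rcases eq_or_ne (x k.succ l) 0 with h | h
  · split_ifs <;> simp [h]
  · have hl : (l:ℕ) < ((k.succ : Fin (m+1)):ℕ) := hsupp _ _ h
    rw [Fin.val_succ] at hl ⊢
    rw [if_pos ⟨by omega, by omega⟩]

include hsupp hcons hR in
lemma outflow_le (k : Fin m) : (∑ l, x k.succ l) ≤ R k := by
  rw [← cut_nat x hsupp a hcons R hR k]
  calc ∑ l, x k.succ l
      = ∑ l : Fin (m+1), (if (l:ℕ) ≤ (k:ℕ) ∧ (k:ℕ) < ((k.succ : Fin (m+1)):ℕ) then x k.succ l else 0) :=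
        Finset.sum_congr rfl fun l _ => xsucc_ite x hsupp k l
    _ ≤ _ := Finset.single_le_sum
        (f := fun i : Fin (m+1) => ∑ l : Fin (m+1), if (l:ℕ) ≤ (k:ℕ) ∧ (k:ℕ) < (i:ℕ) then x i l else 0)
        (fun _ _ => Nat.zero_le _) (Finset.mem_univ k.succ)

include hsupp hcons hR in
lemma outflow_last (k : Fin m) (hk : (k:ℕ)+1 = m) : (∑ l, x k.succ l) = R k := by
  rw [← cut_nat x hsupp a hcons R hR k]
  symm
  rw [Finset.sum_eq_single k.succ]
  · exact (Finset.sum_congr rfl fun l _ => xsucc_ite x hsupp k l).symm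
  · intro i _ hi
    apply Finset.sum_eq_zero
    intro l _
    rw [if_neg]
    rintro ⟨h1, h2⟩
    apply hi
    apply Fin.ext
    rw [Fin.val_succ]
    have := i.isLt
    omega
  · intro h
    exact absurd (Finset.mem_univ _) h

end Cut

def toTable {m : ℕ} (R : Fin m → ℕ) (x : Fin (m+1) → Fin (m+1) → ℕ) : Fin m → Fin m → ℕ :=
  fun i j =>
    if (j:ℕ) ≤ (i:ℕ) then x i.succ j.castSucc
    else if (j:ℕ) = (i:ℕ)+1 then R i - ∑ l, x i.succ l
    else 0

def toFlow {m : ℕ} (D : Fin m → Fin m → ℕ) : Fin (m+1) → Fin (m+1) → ℕ :=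
  fun i j =>
    if h : (j:ℕ) < (i:ℕ) then
      D ⟨(i:ℕ)-1, by have := i.isLt; omega⟩ ⟨(j:ℕ), by have := i.isLt; omega⟩
    else 0

lemma D_congr {m : ℕ} (D : Fin m → Fin m → ℕ) {i i' j j' : Fin m}
    (hi : (i:ℕ) = (i':ℕ)) (hj : (j:ℕ) = (j':ℕ)) : D i j = D i' j' := by
  rw [Fin.eq_of_val_eq hi, Fin.eq_of_val_eq hj]

section Fwd
variable {m : ℕ} (x : Fin (m+1) → Fin (m+1) → ℕ)
  (hsupp : ∀ i j, x i j ≠ 0 → j < i)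
  (a : Fin (m+1) → ℤ)
  (hcons : ∀ v, (∑ i, (x i v : ℤ)) - ∑ j, (x v j : ℤ) = a v)
  (R : Fin m → ℕ)
  (hR : ∀ k : Fin m, (R k : ℤ) =
    ∑ i ∈ Finset.univ.filter (fun i : Fin (m+1) => (i : ℕ) ≤ (k : ℕ)), a i)

include hR in
lemma R_step (j : Fin m) (hj : 1 ≤ (j:ℕ)) :
    (R j : ℤ) = R ⟨(j:ℕ)-1, by have := j.isLt; omega⟩ + a j.castSucc := by
  rw [hR j, hR ⟨(j:ℕ)-1, by have := j.isLt; omega⟩]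
  have hins : Finset.univ.filter (fun v : Fin (m+1) => (v:ℕ) ≤ (j:ℕ))
      = insert j.castSucc (Finset.univ.filter (fun v : Fin (m+1) => (v:ℕ) ≤ (j:ℕ)-1)) := by
    ext v
    simp only [Finset.mem_filter, Finset.mem_univ, true_and, Finset.mem_insert, Fin.ext_iff,
      Fin.coe_castSucc]
    omega
  rw [hins, Finset.sum_insert (by simp; omega)]
  ring

include hR in
lemma R_zero (h0 : 0 < m) : (R ⟨0, h0⟩ : ℤ) = a 0 := by
  rw [hR]
  have : Finset.univ.filter (fun v : Fin (m+1) => (v:ℕ) ≤ ((⟨0,h0⟩ : Fin m):ℕ)) = {0} := by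
    ext v
    simp only [Finset.mem_filter, Finset.mem_univ, true_and, Finset.mem_singleton, Fin.ext_iff,
      Fin.val_zero, Fin.val_mk]
    omega
  rw [this, Finset.sum_singleton]

include hR in
lemma R_last (ha : ∑ v, a v = 0) (h0 : 0 < m) :
    (R ⟨m-1, by omega⟩ : ℤ) = - a (Fin.last m) := by
  have hsplit := Finset.sum_filter_add_sum_filter_not Finset.univ
    (fun v : Fin (m+1) => (v:ℕ) ≤ m-1) a
  rw [ha] at hsplit
  have hnot : Finset.univ.filter (fun v : Fin (m+1) => ¬ (v:ℕ) ≤ m-1) = {Fin.last m} := by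
    ext v
    have := v.isLt
    simp only [Finset.mem_filter, Finset.mem_univ, true_and, Finset.mem_singleton, Fin.ext_iff,
      Fin.val_last]
    omega
  rw [hnot, Finset.sum_singleton] at hsplit
  rw [hR]
  have : (((⟨m-1, by omega⟩ : Fin m)):ℕ) = m-1 := rfl
  rw [this]
  linarith

include hsupp hcons hR in
lemma toTable_rowsum (i : Fin m) : ∑ j, toTable R x i j = R i := by
  have hsplit : ∀ j : Fin m, toTable R x i j
      = (if (j:ℕ) ≤ (i:ℕ) then x i.succ j.castSucc else 0)
        + (if (j:ℕ) = (i:ℕ)+1 then R i - ∑ l, x i.succ l else 0) := by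
    intro j
    unfold toTable
    split_ifs <;> omega
  rw [Finset.sum_congr rfl fun j _ => hsplit j, Finset.sum_add_distrib]
  have hA : (∑ j : Fin m, if (j:ℕ) ≤ (i:ℕ) then x i.succ j.castSucc else 0)
      = ∑ l, x i.succ l := by
    rw [Fin.sum_univ_castSucc (f := fun l => x i.succ l)]
    have h2 : x i.succ (Fin.last m) = 0 := by
      by_contra h
      have := hsupp _ _ h
      rw [Fin.lt_def, Fin.val_last, Fin.val_succ] at this
      have := i.isLt
      omega
    rw [h2, add_zero]
    refine Finset.sum_congr rfl fun j _ => ?_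
    by_cases hj : (j:ℕ) ≤ (i:ℕ)
    · rw [if_pos hj]
    · rw [if_neg hj]
      by_contra h
      have := hsupp _ _ (Ne.symm h)
      rw [Fin.lt_def, Fin.coe_castSucc, Fin.val_succ] at this
      omega
  have hB : (∑ j : Fin m, if (j:ℕ) = (i:ℕ)+1 then R i - ∑ l, x i.succ l else 0)
      = if (i:ℕ)+1 < m then R i - ∑ l, x i.succ l else 0 := by
    by_cases him : (i:ℕ)+1 < m
    · rw [if_pos him, Finset.sum_eq_single (⟨(i:ℕ)+1, him⟩ : Fin m)]
      · rw [if_pos rfl]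
      · intro j _ hj
        rw [if_neg]
        intro hc
        exact hj (Fin.eq_of_val_eq hc)
      · intro h
        exact absurd (Finset.mem_univ _) h
    · rw [if_neg him]
      apply Finset.sum_eq_zero
      intro j _
      rw [if_neg]
      have := j.isLt
      omega
  rw [hA, hB]
  by_cases him : (i:ℕ)+1 < m
  · rw [if_pos him]
    have := outflow_le x hsupp a hcons R hR i
    omega
  · rw [if_neg him]
    have h := outflow_last x hsupp a hcons R hR i (by have := i.isLt; omega)
    omega

include hsupp hcons hR in
lemma toTable_colsum (j : Fin m) : ∑ i, toTable R x i j = R j := by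
  have hjm : (j:ℕ)-1 < m := by have := j.isLt; omega
  set w : Fin m := ⟨(j:ℕ)-1, hjm⟩ with hwdef
  have hsplit : ∀ i : Fin m, toTable R x i j
      = (if (j:ℕ) ≤ (i:ℕ) then x i.succ j.castSucc else 0)
        + (if (j:ℕ) = (i:ℕ)+1 then R i - ∑ l, x i.succ l else 0) := by
    intro i
    unfold toTable
    split_ifs <;> omega
  rw [Finset.sum_congr rfl fun i _ => hsplit i, Finset.sum_add_distrib]
  have hA : (∑ i : Fin m, if (j:ℕ) ≤ (i:ℕ) then x i.succ j.castSucc else 0)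
      = ∑ i' : Fin (m+1), x i' j.castSucc := by
    rw [Fin.sum_univ_succ (f := fun i' => x i' j.castSucc)]
    have h0 : x 0 j.castSucc = 0 := by
      by_contra h
      have := hsupp _ _ h
      rw [Fin.lt_def] at this
      simp at this
    rw [h0, zero_add]
    refine (Finset.sum_congr rfl fun i _ => ?_).symm
    by_cases hj : (j:ℕ) ≤ (i:ℕ)
    · rw [if_pos hj]
    · rw [if_neg hj]
      by_contra h
      have := hsupp _ _ h
      rw [Fin.lt_def, Fin.coe_castSucc, Fin.val_succ] at this
      omega
  have hB : (∑ i : Fin m, if (j:ℕ) = (i:ℕ)+1 then R i - ∑ l, x i.succ l else 0)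
      = if 1 ≤ (j:ℕ) then R w - ∑ l, x w.succ l else 0 := by
    by_cases hj1 : 1 ≤ (j:ℕ)
    · rw [if_pos hj1, Finset.sum_eq_single w]
      · rw [if_pos (by rw [hwdef]; simp; omega)]
      · intro i _ hi
        rw [if_neg]
        intro hc
        apply hi
        apply Fin.eq_of_val_eq
        rw [hwdef]
        simp
        omega
      · intro h
        exact absurd (Finset.mem_univ _) h
    · rw [if_neg hj1]
      apply Finset.sum_eq_zero
      intro i _
      rw [if_neg]
      omega
  rw [hA, hB]
  by_cases hj1 : 1 ≤ (j:ℕ)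
  · rw [if_pos hj1]
    have hle := outflow_le x hsupp a hcons R hR w
    have hws : w.succ = j.castSucc := by
      apply Fin.eq_of_val_eq
      rw [Fin.val_succ, Fin.coe_castSucc, hwdef]
      simp
      omega
    have hcv := hcons j.castSucc
    have hstep := R_step a R hR j hj1
    have hstep' : (R j : ℤ) = R w + a j.castSucc := by
      rw [hstep]
    zify [hle]
    rw [hws]
    rw [hws] at hle
    zify at hle
    linarith
  · rw [if_neg hj1]
    have hj0 : (j:ℕ) = 0 := by omega
    have h0 : 0 < m := j.pos
    have hz := R_zero a R hR h0
    have hj' : j = ⟨0, h0⟩ := Fin.eq_of_val_eq hj0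
    have hjc : j.castSucc = 0 := by
      apply Fin.eq_of_val_eq
      simp [hj0]
    have hcv := hcons j.castSucc
    have hzero : (∑ l, (x j.castSucc l : ℤ)) = 0 := by
      apply Finset.sum_eq_zero
      intro l _
      have hout : x j.castSucc l = 0 := by
        by_contra h
        have := hsupp _ _ h
        rw [Fin.lt_def, hjc] at this
        simp at this
      rw [hout]
      rfl
    rw [hzero, sub_zero] at hcv
    rw [hjc] at hcv
    rw [hj']
    zify
    rw [hj'] at hjc
    rw [hjc]
    linarith

lemma toTable_supp (i j : Fin m) (h : toTable R x i j ≠ 0) : (j:ℕ) ≤ (i:ℕ)+1 := by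
  by_contra hc
  apply h
  unfold toTable
  rw [if_neg (by omega), if_neg (by omega)]

end Fwd

section Bwd
variable {m : ℕ} (D : Fin m → Fin m → ℕ)
  (R : Fin m → ℕ)
  (hrow : ∀ i, ∑ j, D i j = R i)
  (hcol : ∀ j, ∑ i, D i j = R j)
  (hsuppD : ∀ i j, D i j ≠ 0 → (j:ℕ) ≤ (i:ℕ)+1)
  (a : Fin (m+1) → ℤ)
  (hR : ∀ k : Fin m, (R k : ℤ) =
    ∑ i ∈ Finset.univ.filter (fun i : Fin (m+1) => (i : ℕ) ≤ (k : ℕ)), a i)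
  (ha : ∑ v, a v = 0)

lemma toFlow_supp (i j : Fin (m+1)) (h : toFlow D i j ≠ 0) : j < i := by
  rw [Fin.lt_def]
  by_contra hc
  apply h
  unfold toFlow
  rw [dif_neg (by omega)]

include hcol hsuppD in
lemma toFlow_in (v : Fin (m+1)) (hv : (v:ℕ) < m) :
    (∑ i, (toFlow D i v : ℤ))
      = (R ⟨(v:ℕ), hv⟩ : ℤ)
        - ∑ i : Fin m, (if (i:ℕ)+1 = (v:ℕ) then (D i ⟨(v:ℕ), hv⟩ : ℤ) else 0) := by
  set v' : Fin m := ⟨(v:ℕ), hv⟩ with hv'def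
  have hInSucc : ∀ i : Fin m, toFlow D i.succ v = if (v:ℕ) ≤ (i:ℕ) then D i v' else 0 := by
    intro i
    unfold toFlow
    by_cases h : (v:ℕ) < ((i.succ : Fin (m+1)):ℕ)
    · rw [dif_pos h, if_pos (by rw [Fin.val_succ] at h; omega)]
      exact D_congr D (by simp) rfl
    · rw [dif_neg h, if_neg (by rw [Fin.val_succ] at h; omega)]
  have hInEq : (∑ i, toFlow D i v) = ∑ i : Fin m, (if (v:ℕ) ≤ (i:ℕ) then D i v' else 0) := by
    rw [Fin.sum_univ_succ (f := fun i => toFlow D i v)]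
    have h00 : toFlow D 0 v = 0 := by unfold toFlow; rw [dif_neg (by simp)]
    rw [h00, zero_add]
    exact Finset.sum_congr rfl fun i _ => hInSucc i
  have key2 : ∀ i : Fin m, ((if (v:ℕ) ≤ (i:ℕ) then (D i v' : ℤ) else 0))
      = (D i v' : ℤ) - (if (i:ℕ)+1 = (v:ℕ) then (D i v' : ℤ) else 0) := by
    intro i
    rcases eq_or_ne (D i v') 0 with h | h
    · simp [h]
    · have hle := hsuppD i v' h
      rw [hv'def] at hle
      simp only at hle
      split_ifs <;> omega
  have c1 : (∑ i, (toFlow D i v : ℤ)) = ((∑ i, toFlow D i v : ℕ) : ℤ) := by push_cast; rfl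
  rw [c1, hInEq]
  push_cast
  rw [Finset.sum_congr rfl fun i _ => key2 i, Finset.sum_sub_distrib]
  congr 1
  rw [← hcol v']
  push_cast
  rfl

include hrow hsuppD in
lemma toFlow_out_pos (v : Fin (m+1)) (hv1 : 1 ≤ (v:ℕ)) (hw : (v:ℕ)-1 < m) :
    (∑ j, (toFlow D v j : ℤ))
      = (R ⟨(v:ℕ)-1, hw⟩ : ℤ)
        - ∑ j : Fin m, (if (j:ℕ) = (v:ℕ) then (D ⟨(v:ℕ)-1, hw⟩ j : ℤ) else 0) := by
  set w : Fin m := ⟨(v:ℕ)-1, hw⟩ with hwdef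
  have hOutCast : ∀ j : Fin m, toFlow D v j.castSucc = if (j:ℕ) < (v:ℕ) then D w j else 0 := by
    intro j
    unfold toFlow
    by_cases h : ((j.castSucc : Fin (m+1)):ℕ) < (v:ℕ)
    · rw [dif_pos h, if_pos (by rw [Fin.coe_castSucc] at h; omega)]
      exact D_congr D rfl (by simp)
    · rw [dif_neg h, if_neg (by rw [Fin.coe_castSucc] at h; omega)]
  have hOutLast : toFlow D v (Fin.last m) = 0 := by
    unfold toFlow
    rw [dif_neg (by rw [Fin.val_last]; omega)]
  have hOutEq : (∑ j, toFlow D v j) = ∑ j : Fin m, (if (j:ℕ) < (v:ℕ) then D w j else 0) := by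
    rw [Fin.sum_univ_castSucc (f := fun j => toFlow D v j)]
    rw [hOutLast, add_zero]
    exact Finset.sum_congr rfl fun j _ => hOutCast j
  have key3 : ∀ j : Fin m, ((if (j:ℕ) < (v:ℕ) then (D w j : ℤ) else 0))
      = (D w j : ℤ) - (if (j:ℕ) = (v:ℕ) then (D w j : ℤ) else 0) := by
    intro j
    rcases eq_or_ne (D w j) 0 with h | h
    · simp [h]
    · have hle := hsuppD w j h
      rw [hwdef] at hle
      simp only at hle
      split_ifs <;> omega
  have c1 : (∑ j, (toFlow D v j : ℤ)) = ((∑ j, toFlow D v j : ℕ) : ℤ) := by push_cast; rfl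
  rw [c1, hOutEq]
  push_cast
  rw [Finset.sum_congr rfl fun j _ => key3 j, Finset.sum_sub_distrib]
  congr 1
  rw [← hrow w]
  push_cast
  rfl

include hrow hcol hsuppD hR ha in
lemma toFlow_cons (v : Fin (m+1)) :
    (∑ i, (toFlow D i v : ℤ)) - ∑ j, (toFlow D v j : ℤ) = a v := by
  have hvm := v.isLt
  by_cases hv : (v:ℕ) < m
  · by_cases hv1 : 1 ≤ (v:ℕ)
    · -- 1 ≤ v < m
      have hw : (v:ℕ)-1 < m := by omega
      have hIn := toFlow_in D R hcol hsuppD v hv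
      have hOut := toFlow_out_pos D R hrow hsuppD v hv1 hw
      have hbIn : (∑ i : Fin m, if (i:ℕ)+1 = (v:ℕ) then (D i ⟨(v:ℕ), hv⟩ : ℤ) else 0)
          = (D ⟨(v:ℕ)-1, hw⟩ ⟨(v:ℕ), hv⟩ : ℤ) := by
        rw [Finset.sum_eq_single (⟨(v:ℕ)-1, hw⟩ : Fin m)]
        · rw [if_pos (by simp; omega)]
        · intro i _ hi
          rw [if_neg]
          intro hc
          exact hi (Fin.eq_of_val_eq (by simp; omega))
        · intro h
          exact absurd (Finset.mem_univ _) h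
      have hbOut : (∑ j : Fin m, if (j:ℕ) = (v:ℕ) then (D ⟨(v:ℕ)-1, hw⟩ j : ℤ) else 0)
          = (D ⟨(v:ℕ)-1, hw⟩ ⟨(v:ℕ), hv⟩ : ℤ) := by
        rw [Finset.sum_eq_single (⟨(v:ℕ), hv⟩ : Fin m)]
        · rw [if_pos rfl]
        · intro j _ hj
          rw [if_neg]
          intro hc
          exact hj (Fin.eq_of_val_eq hc)
        · intro h
          exact absurd (Finset.mem_univ _) h
      have hstep := R_step a R hR ⟨(v:ℕ), hv⟩ hv1
      have hvc : ((⟨(v:ℕ), hv⟩ : Fin m)).castSucc = v := Fin.eq_of_val_eq rfl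
      rw [hvc] at hstep
      rw [hIn, hOut, hbIn, hbOut]
      simp only at hstep
      linarith [hstep]
    · -- v = 0 < m
      have hv0 : (v:ℕ) = 0 := by omega
      have hIn := toFlow_in D R hcol hsuppD v hv
      have hbIn : (∑ i : Fin m, if (i:ℕ)+1 = (v:ℕ) then (D i ⟨(v:ℕ), hv⟩ : ℤ) else 0) = 0 := by
        apply Finset.sum_eq_zero
        intro i _
        rw [if_neg (by omega)]
      have hOut0 : (∑ j, (toFlow D v j : ℤ)) = 0 := by
        apply Finset.sum_eq_zero
        intro l _
        have : toFlow D v l = 0 := by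
          unfold toFlow
          rw [dif_neg (by omega)]
        rw [this]
        rfl
      have hz := R_zero a R hR (by omega : 0 < m)
      have hveq : v = (0 : Fin (m+1)) := Fin.eq_of_val_eq (by simpa using hv0)
      have hv'eq : (⟨(v:ℕ), hv⟩ : Fin m) = ⟨0, by omega⟩ := Fin.eq_of_val_eq hv0
      rw [hIn, hbIn, hOut0, hv'eq]
      have hva := congrArg a hveq
      linarith [hz, hva]
  · -- v = m
    have hvm' : (v:ℕ) = m := by omega
    have hIn0 : (∑ i, (toFlow D i v : ℤ)) = 0 := by
      apply Finset.sum_eq_zero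
      intro i _
      have : toFlow D i v = 0 := by
        unfold toFlow
        rw [dif_neg (by have := i.isLt; omega)]
      rw [this]
      rfl
    by_cases hv1 : 1 ≤ (v:ℕ)
    · have hw : (v:ℕ)-1 < m := by omega
      have hOut := toFlow_out_pos D R hrow hsuppD v hv1 hw
      have hbOut : (∑ j : Fin m, if (j:ℕ) = (v:ℕ) then (D ⟨(v:ℕ)-1, hw⟩ j : ℤ) else 0) = 0 := by
        apply Finset.sum_eq_zero
        intro j _
        rw [if_neg (by have := j.isLt; omega)]
      have hlast := R_last a R hR ha (by omega : 0 < m)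
      have hveq : v = Fin.last m := Fin.eq_of_val_eq (by simpa using hvm')
      have hweq : (⟨(v:ℕ)-1, hw⟩ : Fin m) = (⟨m-1, by omega⟩ : Fin m) :=
        Fin.eq_of_val_eq (by simp only []; omega)
      have hva := congrArg a hveq
      rw [hIn0, hOut, hbOut, hweq]
      linarith [hlast, hva]
    · -- m = 0, v = 0
      have hm0 : m = 0 := by omega
      have hOut0 : (∑ j, (toFlow D v j : ℤ)) = 0 := by
        apply Finset.sum_eq_zero
        intro l _
        have : toFlow D v l = 0 := by
          unfold toFlow
          rw [dif_neg (by omega)]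
        rw [this]
        rfl
      have haeq : ∀ u : Fin (m+1), u = v := by
        intro u
        apply Fin.eq_of_val_eq
        have := u.isLt
        omega
      have hav : a v = 0 := by
        rw [Finset.sum_congr rfl (fun u _ => congrArg a (haeq u))] at ha
        rw [Finset.sum_const, Finset.card_univ, Fintype.card_fin, hm0] at ha
        simpa using ha
      rw [hIn0, hOut0, hav]
      ring

end Bwd

lemma toFlow_toTable {m : ℕ} (x : Fin (m+1) → Fin (m+1) → ℕ)
    (hsupp : ∀ i j, x i j ≠ 0 → j < i) (R : Fin m → ℕ) (i j : Fin (m+1)) :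
    toFlow (toTable R x) i j = x i j := by
  unfold toFlow
  by_cases h : (j:ℕ) < (i:ℕ)
  · rw [dif_pos h]
    unfold toTable
    rw [if_pos (by simp only []; omega)]
    have h1 : (((⟨(i:ℕ)-1, by have := i.isLt; omega⟩ : Fin m)).succ : Fin (m+1)) = i :=
      Fin.eq_of_val_eq (by rw [Fin.val_succ]; simp only []; omega)
    have h2 : (((⟨(j:ℕ), by have := i.isLt; omega⟩ : Fin m)).castSucc : Fin (m+1)) = j :=
      Fin.eq_of_val_eq (by rw [Fin.coe_castSucc])
    rw [h1, h2]
  · rw [dif_neg h]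
    rcases eq_or_ne (x i j) 0 with h0 | h0
    · rw [h0]
    · have := hsupp i j h0
      rw [Fin.lt_def] at this
      omega

lemma toTable_toFlow {m : ℕ} (D : Fin m → Fin m → ℕ) (R : Fin m → ℕ)
    (hrow : ∀ i, ∑ j, D i j = R i)
    (hsuppD : ∀ i j, D i j ≠ 0 → (j:ℕ) ≤ (i:ℕ)+1) (i j : Fin m) :
    toTable R (toFlow D) i j = D i j := by
  unfold toTable
  by_cases hj : (j:ℕ) ≤ (i:ℕ)
  · rw [if_pos hj]
    unfold toFlow
    rw [dif_pos (by rw [Fin.coe_castSucc, Fin.val_succ]; omega)]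
    exact D_congr D rfl rfl
  · rw [if_neg hj]
    by_cases hj1 : (j:ℕ) = (i:ℕ)+1
    · rw [if_pos hj1]
      have hsum : (∑ l, toFlow D i.succ l)
          = ∑ l : Fin m, (if (l:ℕ) ≤ (i:ℕ) then D i l else 0) := by
        rw [Fin.sum_univ_castSucc (f := fun l => toFlow D i.succ l)]
        have hlast : toFlow D i.succ (Fin.last m) = 0 := by
          unfold toFlow
          rw [dif_neg (by rw [Fin.val_last, Fin.val_succ]; have := j.isLt; omega)]
        rw [hlast, add_zero]
        refine Finset.sum_congr rfl fun l _ => ?_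
        unfold toFlow
        by_cases hl : ((l.castSucc : Fin (m+1)):ℕ) < ((i.succ : Fin (m+1)):ℕ)
        · rw [dif_pos hl, if_pos (by rw [Fin.coe_castSucc, Fin.val_succ] at hl; omega)]
          exact D_congr D rfl rfl
        · rw [dif_neg hl, if_neg (by rw [Fin.coe_castSucc, Fin.val_succ] at hl; omega)]
      have hRsum : (∑ l : Fin m, (if (l:ℕ) ≤ (i:ℕ) then D i l else 0)) + D i j = R i := by
        rw [← hrow i]
        have hpt : ∀ l : Fin m, D i l
            = (if (l:ℕ) ≤ (i:ℕ) then D i l else 0) + (if l = j then D i l else 0) := by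
          intro l
          rcases eq_or_ne (D i l) 0 with h0 | h0
          · simp [h0]
          · have := hsuppD i l h0
            by_cases hl : (l:ℕ) ≤ (i:ℕ)
            · rw [if_pos hl, if_neg (by intro hc; rw [hc] at hl; omega), add_zero]
            · have hlj : l = j := Fin.eq_of_val_eq (by omega)
              rw [if_neg hl, if_pos hlj, zero_add]
        rw [Finset.sum_congr rfl fun l _ => hpt l, Finset.sum_add_distrib,
          Finset.sum_ite_eq' Finset.univ j (fun l => D i l), if_pos (Finset.mem_univ j)]
      rw [hsum]
      omega
    · rw [if_neg hj1]
      rcases eq_or_ne (D i j) 0 with h0 | h0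
      · rw [h0]
      · have := hsuppD i j h0
        omega

def flowsTablesEquiv {m : ℕ} (a : Fin (m+1) → ℤ) (R : Fin m → ℕ)
    (hR : ∀ k : Fin m, (R k : ℤ) =
      ∑ i ∈ Finset.univ.filter (fun i : Fin (m+1) => (i : ℕ) ≤ (k : ℕ)), a i)
    (ha : ∑ v, a v = 0) :
    {x : Fin (m+1) → Fin (m+1) → ℕ //
        (∀ i j, x i j ≠ 0 → j < i) ∧
        ∀ v, (∑ i, (x i v : ℤ)) - ∑ j, (x v j : ℤ) = a v}
      ≃ {D : Fin m → Fin m → ℕ //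
        ((∀ i, ∑ j, D i j = R i) ∧ (∀ j, ∑ i, D i j = R j)) ∧
        ∀ i j, D i j ≠ 0 → (j:ℕ) ≤ (i:ℕ)+1} where
  toFun := fun ⟨x, hsupp, hcons⟩ =>
    ⟨toTable R x,
      ⟨⟨toTable_rowsum x hsupp a hcons R hR, toTable_colsum x hsupp a hcons R hR⟩,
        toTable_supp x R⟩⟩
  invFun := fun ⟨D, ⟨hrow, hcol⟩, hsuppD⟩ =>
    ⟨toFlow D, toFlow_supp D,
      toFlow_cons D R hrow hcol hsuppD a hR ha⟩
  left_inv := fun ⟨x, hsupp, hcons⟩ =>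
    Subtype.ext (funext fun i => funext fun j => toFlow_toTable x hsupp R i j)
  right_inv := fun ⟨D, ⟨hrow, hcol⟩, hsuppD⟩ =>
    Subtype.ext (funext fun i => funext fun j => toTable_toFlow D R hrow hsuppD i j)

/-- The Kostant partition function `φ(a)`: the number of integer feasible flows on the
complete acyclic digraph on `{1,…,n}` with edges `i → j` for `i > j` (tail `i`, head `j`)
and excess `a v` at every vertex `v`. A flow is encoded as `x : Fin n → Fin n → ℕ` with
`x i j` the flow on the edge `i → j`, vanishing unless `j < i`. -/
noncomputable def kostant {n : ℕ} (a : Fin n → ℤ) : ℕ :=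
  Nat.card {x : Fin n → Fin n → ℕ //
    (∀ i j, x i j ≠ 0 → j < i) ∧
    ∀ v, (∑ i, (x i v : ℤ)) - ∑ j, (x v j : ℤ) = a v}

theorem kostant_eq_tableWeight {n : ℕ} (a : Fin n → ℤ) (ha : ∑ v, a v = 0)
    (R : Fin (n - 1) → ℕ)
    (hR : ∀ k : Fin (n - 1),
      (R k : ℤ) = ∑ i ∈ Finset.univ.filter (fun i : Fin n => (i : ℕ) ≤ (k : ℕ)), a i)
    (hRpos : ∀ k, 0 < R k)
    (W : Fin (n - 1) → Fin (n - 1) → ℝ)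
    (hW : ∀ i j, W i j = if (j : ℕ) ≤ (i : ℕ) + 1 then 1 else 0) :
    (kostant a : ℝ) = tableWeight R R W := by
  rw [tableWeight_eq_card R R W (fun i j => (j:ℕ) ≤ (i:ℕ)+1) hW]
  norm_cast
  cases n with
  | zero =>
    unfold kostant
    haveI h1 : Unique {x : Fin 0 → Fin 0 → ℕ //
        (∀ i j, x i j ≠ 0 → j < i) ∧
        ∀ v, (∑ i, (x i v : ℤ)) - ∑ j, (x v j : ℤ) = a v} :=
      ⟨⟨⟨fun i => i.elim0, fun i => i.elim0, fun v => v.elim0⟩⟩,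
        fun x => Subtype.ext (funext fun i => i.elim0)⟩
    haveI h2 : Unique {D : Fin 0 → Fin 0 → ℕ //
        ((∀ i, ∑ j, D i j = R i) ∧ (∀ j, ∑ i, D i j = R j)) ∧
        ∀ i j, D i j ≠ 0 → (j:ℕ) ≤ (i:ℕ)+1} :=
      ⟨⟨⟨fun i => i.elim0, ⟨fun i => i.elim0, fun j => j.elim0⟩, fun i => i.elim0⟩⟩,
        fun x => Subtype.ext (funext fun i => i.elim0)⟩
    rw [Nat.card_unique, Nat.card_unique]
  | succ m =>
    exact Nat.card_congr (flowsTablesEquiv a R hR ha)
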